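/- Let φ, ψ : ℝ → ℝ be integrable functions such that |φ̂(ω)|² + Σ_{j=0}^{∞} |ψ̂(2^{−j} ω)|² = 1 for almost every ω ∈ ℝ. Fix an integer J and write F_J(t) = |φ̂(2^{−J} t)|² and G_j(t) = |ψ̂(2^{−j} t)|². Then for every θ ∈ ℝ and almost every ξ ∈ ℝ² (with respect to two-dimensional Lebesgue measure): F_J(⟨ξ,u_θ⟩)·F_J(⟨ξ,v_θ⟩) + Σ_{j=J}^{∞} F_J(⟨ξ,u_θ⟩)·G_j(⟨ξ,v_θ⟩) + Σ_{j=J}^{∞} G_j(⟨ξ,u_θ⟩)·F_J(⟨ξ,v_θ⟩) + Σ_{j=J}^{∞} Σ_{k=J}^{∞} G_j(⟨ξ,u_θ⟩)·G_k(⟨ξ,v_θ⟩) = 1, with all series converging. -/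

import Mathlib

open MeasureTheory Real RealInnerProductSpace

/-- The unit vector u_θ = (cos θ, sin θ) in ℝ². -/
noncomputable def uVec (θ : ℝ) : EuclideanSpace ℝ (Fin 2) :=
  (WithLp.equiv 2 (Fin 2 → ℝ)).symm ![Real.cos θ, Real.sin θ]

/-- The unit vector v_θ = u_{θ+π/2} = (−sin θ, cos θ) in ℝ². -/
noncomputable def vVec (θ : ℝ) : EuclideanSpace ℝ (Fin 2) :=
  (WithLp.equiv 2 (Fin 2 → ℝ)).symm ![-Real.sin θ, Real.cos θ]

/-- The radialization η²(x) = (1/(2π)) ∫₀^{2π} η(⟨x,u_θ⟩) η(⟨x,v_θ⟩) dθ. -/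
noncomputable def radialization (η : ℝ → ℝ) (x : EuclideanSpace ℝ (Fin 2)) : ℝ :=
  (1 / (2 * π)) * ∫ θ in (0:ℝ)..(2 * π), η ⟪x, uVec θ⟫ * η ⟪x, vVec θ⟫

open FourierTransform

/-- F_J(t) = |φ̂(2^{−J} t)|². -/
noncomputable def FJ (φ : ℝ → ℝ) (J : ℤ) (t : ℝ) : ℝ :=
  ‖𝓕 (fun x : ℝ => (φ x : ℂ)) ((2:ℝ) ^ (-J) * t)‖ ^ 2

/-- G_j(t) = |ψ̂(2^{−j} t)|². -/
noncomputable def Gj (ψ : ℝ → ℝ) (j : ℤ) (t : ℝ) : ℝ :=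
  ‖𝓕 (fun x : ℝ => (ψ x : ℂ)) ((2:ℝ) ^ (-j) * t)‖ ^ 2

section Aux

lemma coord_null' {N : Set ℝ} (hN : volume N = 0) (i : Fin 2) :
    volume {x : EuclideanSpace ℝ (Fin 2) | x i ∈ N} = 0 := by
  have hpi : volume ({x : Fin 2 → ℝ | x i ∈ N}) = 0 := by
    have he : {x : Fin 2 → ℝ | x i ∈ N} = Set.univ.pi (fun j => if j = i then N else Set.univ) := by
      ext x
      simp only [Set.mem_setOf_eq, Set.mem_pi, Set.mem_univ, forall_true_left]
      constructor
      · intro h j; by_cases hj : j = i <;> simp [hj, h]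
      · intro h; simpa using h i
    rw [he, volume_pi, Measure.pi_pi]
    fin_cases i <;> simp [Fin.prod_univ_two, hN]
  have hmp := EuclideanSpace.volume_preserving_symm_measurableEquiv_toLp (Fin 2)
  have he2 : {x : EuclideanSpace ℝ (Fin 2) | x i ∈ N}
      = (MeasurableEquiv.toLp 2 (Fin 2 → ℝ)).symm ⁻¹' {x : Fin 2 → ℝ | x i ∈ N} := rfl
  rw [he2]
  exact hmp.quasiMeasurePreserving.preimage_null hpi

lemma inner_null' {N : Set ℝ} (hN : volume N = 0) (θ : ℝ) :
    ∀ᵐ ξ : EuclideanSpace ℝ (Fin 2), ⟪ξ, uVec θ⟫ ∉ N ∧ ⟪ξ, vVec θ⟫ ∉ N := by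
  have hon : Orthonormal ℝ (![uVec θ, vVec θ]) := by
    rw [orthonormal_iff_ite]
    intro i j
    fin_cases i <;> fin_cases j <;>
      simp [uVec, vVec, PiLp.inner_apply, Fin.sum_univ_two, RCLike.inner_apply,
        WithLp.equiv_symm_apply, EuclideanSpace.norm_eq] <;>
      nlinarith [sin_sq_add_cos_sq θ]
  have hsp : ⊤ ≤ Submodule.span ℝ (Set.range (![uVec θ, vVec θ])) := by
    rw [hon.linearIndependent.span_eq_top_of_card_eq_finrank (by simp)]
  let b : OrthonormalBasis (Fin 2) ℝ (EuclideanSpace ℝ (Fin 2)) := OrthonormalBasis.mk hon hsp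
  have hb : ∀ ξ i, b.repr ξ i = ⟪ξ, (![uVec θ, vVec θ]) i⟫ := by
    intro ξ i
    rw [b.repr_apply_apply, real_inner_comm, OrthonormalBasis.coe_mk]
  have hq := b.measurePreserving_repr.quasiMeasurePreserving
  have h0 : volume {x : EuclideanSpace ℝ (Fin 2) | x 0 ∈ N ∨ x 1 ∈ N} = 0 := by
    have he : {x : EuclideanSpace ℝ (Fin 2) | x 0 ∈ N ∨ x 1 ∈ N}
        = {x : EuclideanSpace ℝ (Fin 2) | x 0 ∈ N} ∪ {x | x 1 ∈ N} := rfl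
    rw [he]; exact measure_union_null (coord_null' hN 0) (coord_null' hN 1)
  have h1 := hq.preimage_null h0
  rw [ae_iff]
  refine measure_mono_null ?_ h1
  intro ξ hξ
  simp only [Set.mem_setOf_eq, not_and_or, not_not] at hξ
  have e0 : b.repr ξ 0 = ⟪ξ, uVec θ⟫ := by rw [hb ξ 0]; simp
  have e1 : b.repr ξ 1 = ⟪ξ, vVec θ⟫ := by rw [hb ξ 1]; simp
  show b.repr ξ 0 ∈ N ∨ b.repr ξ 1 ∈ N
  rw [e0, e1]; exact hξ

lemma Gj_nonneg (ψ : ℝ → ℝ) (j : ℤ) (t : ℝ) : 0 ≤ Gj ψ j t := by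
  unfold Gj; positivity

end Aux

set_option maxHeartbeats 1000000 in
theorem product_partition_ae (φ ψ : ℝ → ℝ)
    (hφ : Integrable φ volume) (hψ : Integrable ψ volume)
    (hMRA : ∀ᵐ ω : ℝ, Summable (fun j : ℕ => Gj ψ (j:ℤ) ω) ∧
      FJ φ 0 ω + ∑' j : ℕ, Gj ψ (j:ℤ) ω = 1) (J : ℤ) :
    ∀ θ : ℝ, ∀ᵐ ξ : EuclideanSpace ℝ (Fin 2),
      Summable (fun n : ℕ => FJ φ J ⟪ξ, uVec θ⟫ * Gj ψ (J + n) ⟪ξ, vVec θ⟫) ∧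
      Summable (fun n : ℕ => Gj ψ (J + n) ⟪ξ, uVec θ⟫ * FJ φ J ⟪ξ, vVec θ⟫) ∧
      Summable (fun p : ℕ × ℕ =>
        Gj ψ (J + p.1) ⟪ξ, uVec θ⟫ * Gj ψ (J + p.2) ⟪ξ, vVec θ⟫) ∧
      FJ φ J ⟪ξ, uVec θ⟫ * FJ φ J ⟪ξ, vVec θ⟫
        + (∑' n : ℕ, FJ φ J ⟪ξ, uVec θ⟫ * Gj ψ (J + n) ⟪ξ, vVec θ⟫)
        + (∑' n : ℕ, Gj ψ (J + n) ⟪ξ, uVec θ⟫ * FJ φ J ⟪ξ, vVec θ⟫)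
        + (∑' n : ℕ, ∑' m : ℕ, Gj ψ (J + n) ⟪ξ, uVec θ⟫ * Gj ψ (J + m) ⟪ξ, vVec θ⟫) = 1 := by
  have hscale : ∀ t : ℝ, ∀ n : ℕ, Gj ψ (J + n) t = Gj ψ (n : ℤ) ((2:ℝ) ^ (-J) * t) := by
    intro t n
    unfold Gj
    congr 2
    rw [neg_add, zpow_add₀ (by norm_num : (2:ℝ) ≠ 0)]
    ring
  have hFscale : ∀ t : ℝ, FJ φ J t = FJ φ 0 ((2:ℝ) ^ (-J) * t) := by
    intro t
    unfold FJ
    norm_num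
  set Q : ℝ → Prop := fun t =>
    Summable (fun n : ℕ => Gj ψ (J + n) t) ∧ FJ φ J t + ∑' n : ℕ, Gj ψ (J + n) t = 1 with hQ
  have haeQ : ∀ᵐ t : ℝ, Q t := by
    have hnull : volume {ω : ℝ | ¬ (Summable (fun j : ℕ => Gj ψ (j:ℤ) ω) ∧
        FJ φ 0 ω + ∑' j : ℕ, Gj ψ (j:ℤ) ω = 1)} = 0 := ae_iff.mp hMRA
    rw [ae_iff]
    have hsub : {t : ℝ | ¬ Q t} ⊆ ((2:ℝ) ^ (-J) * ·) ⁻¹'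
        {ω : ℝ | ¬ (Summable (fun j : ℕ => Gj ψ (j:ℤ) ω) ∧
          FJ φ 0 ω + ∑' j : ℕ, Gj ψ (j:ℤ) ω = 1)} := by
      intro t ht
      simp only [Set.mem_setOf_eq, hQ, Set.mem_preimage] at ht ⊢
      intro hc
      apply ht
      refine ⟨hc.1.congr fun n => (hscale t n).symm, ?_⟩
      rw [hFscale t]
      calc FJ φ 0 ((2:ℝ) ^ (-J) * t) + ∑' n : ℕ, Gj ψ (J + n) t
          = FJ φ 0 ((2:ℝ) ^ (-J) * t) + ∑' n : ℕ, Gj ψ (n:ℤ) ((2:ℝ) ^ (-J) * t) := by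
            rw [tsum_congr (fun n => hscale t n)]
        _ = 1 := hc.2
    refine measure_mono_null hsub ?_
    rw [Real.volume_preimage_mul_left (by positivity : ((2:ℝ) ^ (-J)) ≠ 0), hnull, mul_zero]
  intro θ
  have hae2 := inner_null' (ae_iff.mp haeQ) θ
  filter_upwards [hae2] with ξ hξ
  obtain ⟨hu, hv⟩ := hξ
  obtain ⟨hsuS, hsuE⟩ := of_not_not hu
  obtain ⟨hsvS, hsvE⟩ := of_not_not hv
  refine ⟨hsvS.mul_left _, hsuS.mul_right _, ?_, ?_⟩
  · exact Summable.mul_of_nonneg hsuS hsvS (fun n => Gj_nonneg ψ _ _) (fun n => Gj_nonneg ψ _ _)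
  · rw [tsum_mul_left, tsum_mul_right,
      show (∑' n : ℕ, ∑' m : ℕ, Gj ψ (J + n) ⟪ξ, uVec θ⟫ * Gj ψ (J + m) ⟪ξ, vVec θ⟫)
          = (∑' n : ℕ, Gj ψ (J + n) ⟪ξ, uVec θ⟫) * (∑' m : ℕ, Gj ψ (J + m) ⟪ξ, vVec θ⟫) from
        (tsum_congr fun n => tsum_mul_left).trans tsum_mul_right]
    calc FJ φ J ⟪ξ, uVec θ⟫ * FJ φ J ⟪ξ, vVec θ⟫
          + FJ φ J ⟪ξ, uVec θ⟫ * (∑' n : ℕ, Gj ψ (J + n) ⟪ξ, vVec θ⟫)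
          + (∑' n : ℕ, Gj ψ (J + n) ⟪ξ, uVec θ⟫) * FJ φ J ⟪ξ, vVec θ⟫
          + (∑' n : ℕ, Gj ψ (J + n) ⟪ξ, uVec θ⟫) * (∑' m : ℕ, Gj ψ (J + m) ⟪ξ, vVec θ⟫)
        = (FJ φ J ⟪ξ, uVec θ⟫ + ∑' n : ℕ, Gj ψ (J + n) ⟪ξ, uVec θ⟫)
          * (FJ φ J ⟪ξ, vVec θ⟫ + ∑' n : ℕ, Gj ψ (J + n) ⟪ξ, vVec θ⟫) := by ring
      _ = 1 := by rw [hsuE, hsvE, one_mul]
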